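/- With the trace polynomials T_{p/q}(x) defined by the recursion T_{0/1} = x, T_{1/0} = 2, T_{1/1} = 1−x and new vertex label 2 − uv − w, one has T_{p/q}(x) = T_{(p+q)/q}(1 − x) for all p/q. -/
import Mathlib


open Polynomial

/-- Auxiliary predicate: the symmetry property at a single pair. -/
def GoodTP (T : ℤ → ℤ → Polynomial ℂ) (p q : ℤ) : Prop :=
  T p q = (T (p + q) q).comp (1 - Polynomial.X)

lemma goodTP_neg (T : ℤ → ℤ → Polynomial ℂ)
    (hneg : ∀ p q : ℤ, T (-p) (-q) = T p q)
    (p q : ℤ) (h : GoodTP T p q) : GoodTP T (-p) (-q) := by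
  unfold GoodTP at *
  rw [hneg, show -p + -q = -(p + q) by ring, hneg]
  exact h

lemma goodTP_mediant (T : ℤ → ℤ → Polynomial ℂ)
    (hrec : ∀ p q r s : ℤ, p * s - r * q = 1 →
      T (p + r) (q + s) = 2 - T p q * T r s - T (p - r) (q - s))
    (p q r s : ℤ) (hdet : p * s - r * q = 1)
    (hpq : GoodTP T p q) (hrs : GoodTP T r s) (hd : GoodTP T (p - r) (q - s)) :
    GoodTP T (p + r) (q + s) := by
  unfold GoodTP at *
  have h1 := hrec p q r s hdet
  have h2 := hrec (p + q) q (r + s) s (by linear_combination hdet)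
  rw [h1, hpq, hrs, hd]
  rw [show p + r + (q + s) = p + q + (r + s) by ring, h2]
  rw [show p - r + (q - s) = p + q - (r + s) by ring]
  simp [sub_comp, mul_comp]

lemma goodTP_diff (T : ℤ → ℤ → Polynomial ℂ)
    (hrec : ∀ p q r s : ℤ, p * s - r * q = 1 →
      T (p + r) (q + s) = 2 - T p q * T r s - T (p - r) (q - s))
    (p q r s : ℤ) (hdet : p * s - r * q = 1)
    (hpq : GoodTP T p q) (hrs : GoodTP T r s) (hd : GoodTP T (p + r) (q + s)) :
    GoodTP T (p - r) (q - s) := by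
  unfold GoodTP at *
  have h1 := hrec p q r s hdet
  have h2 := hrec (p + q) q (r + s) s (by linear_combination hdet)
  have h1' : T (p - r) (q - s) = 2 - T p q * T r s - T (p + r) (q + s) := by
    linear_combination h1
  have h2' : T (p + q - (r + s)) (q - s) =
      2 - T (p + q) q * T (r + s) s - T (p + q + (r + s)) (q + s) := by
    linear_combination h2
  rw [h1', hpq, hrs, hd]
  rw [show p - r + (q - s) = p + q - (r + s) by ring, h2']
  rw [show p + r + (q + s) = p + q + (r + s) by ring]
  simp [sub_comp, mul_comp]

section Base

variable (T : ℤ → ℤ → Polynomial ℂ)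
  (h01 : T 0 1 = Polynomial.X)
  (h10 : T 1 0 = 2)
  (h11 : T 1 1 = 1 - Polynomial.X)
  (hneg : ∀ p q : ℤ, T (-p) (-q) = T p q)
  (hrec : ∀ p q r s : ℤ, p * s - r * q = 1 →
      T (p + r) (q + s) = 2 - T p q * T r s - T (p - r) (q - s))

include h01 h11 in
lemma goodTP_01 : GoodTP T 0 1 := by
  unfold GoodTP
  norm_num [h01, h11, sub_comp]

include h10 in
lemma goodTP_10 : GoodTP T 1 0 := by
  unfold GoodTP
  norm_num [h10]

include h01 h10 h11 hneg hrec in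
lemma goodTP_11 : GoodTP T 1 1 := by
  unfold GoodTP
  have h0m1 : T 0 (-1) = Polynomial.X := by
    have := hneg 0 1
    rw [neg_zero] at this
    rw [this, h01]
  have h2 := hrec 1 0 1 1 (by norm_num)
  norm_num [h10, h11, h0m1] at h2
  have h21 : T 2 1 = Polynomial.X := by
    rw [h2]; ring
  norm_num [h11, h21, sub_comp]

include h01 h10 h11 hneg hrec in
lemma goodTP_row : ∀ p : ℤ, GoodTP T p 1 := by
  have g01 := goodTP_01 T h01 h11
  have g10 := goodTP_10 T h10
  have g11 := goodTP_11 T h01 h10 h11 hneg hrec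
  have step : ∀ p : ℤ, GoodTP T (p - 1) 1 → GoodTP T p 1 → GoodTP T (p + 1) 1 := by
    intro p h1 h2
    have hd : GoodTP T (1 - p) (0 - 1) := by
      have := goodTP_neg T hneg (p - 1) 1 h1
      rwa [show -(p - 1) = 1 - p by ring, show (-1 : ℤ) = 0 - 1 by ring] at this
    have h := goodTP_mediant T hrec 1 0 p 1 (by ring) g10 h2 hd
    rwa [show (1 : ℤ) + p = p + 1 by ring, show (0 : ℤ) + 1 = 1 by ring] at h
  have stepdown : ∀ p : ℤ, GoodTP T p 1 → GoodTP T (p + 1) 1 → GoodTP T (p - 1) 1 := by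
    intro p h2 h3
    have h3' : GoodTP T (1 + p) (0 + 1) := by
      rwa [show (1 : ℤ) + p = p + 1 by ring, show (0 : ℤ) + 1 = 1 by ring]
    have h := goodTP_diff T hrec 1 0 p 1 (by ring) g10 h2 h3'
    have := goodTP_neg T hneg (1 - p) (0 - 1) h
    rwa [show -(1 - p) = p - 1 by ring, show -(0 - 1) = (1 : ℤ) by ring] at this
  have fwd : ∀ n : ℕ, GoodTP T (n : ℤ) 1 ∧ GoodTP T ((n : ℤ) + 1) 1 := by
    intro n
    induction n with
    | zero => exact ⟨by exact_mod_cast g01, by norm_num; exact g11⟩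
    | succ k ih =>
      refine ⟨by push_cast; exact ih.2, ?_⟩
      push_cast
      exact step ((k : ℤ) + 1) (by simpa using ih.1) ih.2
  have bwd : ∀ n : ℕ, GoodTP T (-(n : ℤ)) 1 ∧ GoodTP T (-(n : ℤ) + 1) 1 := by
    intro n
    induction n with
    | zero => exact ⟨by norm_num; exact g01, by norm_num; exact g11⟩
    | succ k ih =>
      refine ⟨?_, by push_cast; rw [show -((k : ℤ) + 1) + 1 = -(k : ℤ) by ring]; exact ih.1⟩
      push_cast
      have := stepdown (-(k : ℤ)) ih.1 ih.2
      rwa [show -(k : ℤ) - 1 = -((k : ℤ) + 1) by ring] at this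
  intro p
  obtain ⟨n, rfl | rfl⟩ := p.eq_nat_or_neg
  · exact (fwd n).1
  · exact (bwd n).1

end Base

theorem trace_polynomial_symmetry
    (T : ℤ → ℤ → Polynomial ℂ)
    (h01 : T 0 1 = Polynomial.X)
    (h10 : T 1 0 = 2)
    (h11 : T 1 1 = 1 - Polynomial.X)
    (hneg : ∀ p q : ℤ, T (-p) (-q) = T p q)
    (hrec : ∀ p q r s : ℤ, p * s - r * q = 1 →
      T (p + r) (q + s) = 2 - T p q * T r s - T (p - r) (q - s)) :
    ∀ p q : ℤ, IsCoprime p q →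
      T p q = (T (p + q) q).comp (1 - Polynomial.X) := by
  have g10 := goodTP_10 T h10
  have grow := goodTP_row T h01 h10 h11 hneg hrec
  have key : ∀ n : ℕ, ∀ p q : ℤ, q.natAbs = n → IsCoprime p q → GoodTP T p q := by
    intro n
    induction n using Nat.strong_induction_on with
    | _ n ih =>
    have pos : ∀ p q : ℤ, 0 < q → q.natAbs = n → IsCoprime p q → GoodTP T p q := by
      intro p q hq0 hqn hco
      by_cases hq1 : q = 1
      · subst hq1; exact grow p
      have hq2 : 2 ≤ q := by omega
      obtain ⟨a, b, hab⟩ := hco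
      set s := a % q with hs
      have hs0 : 0 ≤ s := Int.emod_nonneg a (by omega)
      have hsq : s < q := Int.emod_lt_of_pos a hq0
      have hsne : s ≠ 0 := by
        intro h
        have hdq : q ∣ a := Int.dvd_of_emod_eq_zero h
        obtain ⟨c, rfl⟩ := hdq
        have : q ∣ 1 := ⟨c * p + b, by linear_combination -hab⟩
        have := Int.le_of_dvd one_pos this
        omega
      have hdvd : q ∣ p * s - 1 := by
        have h1 : q ∣ s - a := ⟨-(a / q), by rw [hs, Int.emod_def]; ring⟩
        obtain ⟨c, hc⟩ := h1
        exact ⟨p * c - b, by linear_combination p * hc + hab⟩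
      set r := (p * s - 1) / q with hrdef
      have hr : p * s - r * q = 1 := by
        have h2 := Int.ediv_mul_cancel hdvd
        rw [← hrdef] at h2
        linarith
      have c1 : IsCoprime (p - r) (q - s) := ⟨s, -r, by linear_combination hr⟩
      have c2 : IsCoprime r s := ⟨-q, p, by linear_combination hr⟩
      have c3 : IsCoprime (p - 2 * r) (q - 2 * s) := ⟨s, -r, by linear_combination hr⟩
      have g1 : GoodTP T (p - r) (q - s) := ih _ (by omega) _ _ rfl c1
      have g2 : GoodTP T r s := ih _ (by omega) _ _ rfl c2
      have g3 : GoodTP T (p - 2 * r) (q - 2 * s) := ih _ (by omega) _ _ rfl c3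
      have g3' : GoodTP T (p - r - r) (q - s - s) := by
        rwa [show p - r - r = p - 2 * r by ring, show q - s - s = q - 2 * s by ring]
      have hdet : (p - r) * s - r * (q - s) = 1 := by linear_combination hr
      have h := goodTP_mediant T hrec (p - r) (q - s) r s hdet g1 g2 g3'
      rwa [show p - r + r = p by ring, show q - s + s = q by ring] at h
    intro p q hqn hco
    rcases lt_trichotomy q 0 with hq0 | hq0 | hq0
    · have h := pos (-p) (-q) (by omega) (by omega) hco.neg_neg
      have := goodTP_neg T hneg _ _ h
      rwa [neg_neg, neg_neg] at this
    · subst hq0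
      have hu : IsUnit p := isCoprime_zero_right.mp hco
      rcases Int.isUnit_iff.mp hu with rfl | rfl
      · exact g10
      · have := goodTP_neg T hneg 1 0 g10
        rwa [neg_zero] at this
    · exact pos p q hq0 hqn hco
  intro p q hco
  exact key q.natAbs p q rfl hco
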